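/- (Example 3.5, deformed quaternions.) Let t ∈ ℝ. Let F be the free associative ℝ-algebra on two generators i, j, and let I be the two-sided ideal of F generated by i² + 1, j² + 1, and i·j + j·i − t. Then the images in F/I of the elements 1, i, j, i·j form an ℝ-vector space basis of F/I; in particular F/I is 4-dimensional over ℝ. -/

import Mathlib

/-!
STATEMENT 19 (Example 3.5, deformed quaternions): for `t ∈ ℝ`, the algebra
with generators `i, j` and relations `i² = −1`, `j² = −1`, `i·j + j·i = t`
has `1, i, j, i·j` as an `ℝ`-vector-space basis; in particular it is
4-dimensional over `ℝ`.
-/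

open FreeAlgebra

/-- The free associative `ℝ`-algebra on two generators `i, j`. -/
abbrev F2 : Type := FreeAlgebra ℝ (Fin 2)

/-- The relations `i² + 1 = 0`, `j² + 1 = 0`, `i·j + j·i − t = 0`
(quotienting `F2` by `QRel t` is exactly quotienting by the two-sided ideal
generated by `i² + 1`, `j² + 1`, `i·j + j·i − t`). -/
inductive QRel (t : ℝ) : F2 → F2 → Prop
  | rel1 : QRel t (ι ℝ 0 * ι ℝ 0) (-1)
  | rel2 : QRel t (ι ℝ 1 * ι ℝ 1) (-1)
  | rel3 : QRel t (ι ℝ 0 * ι ℝ 1 + ι ℝ 1 * ι ℝ 0) (algebraMap ℝ F2 t)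

open Quaternion in
/-- The concrete model: a quaternion algebra. -/
noncomputable def modelHom (t : ℝ) : RingQuot (QRel t) →ₐ[ℝ] ℍ[ℝ, -1, t^2/4 - 1] :=
  RingQuot.liftAlgHom ℝ ⟨FreeAlgebra.lift ℝ ![⟨0,1,0,0⟩, ⟨0,-(t/2),1,0⟩], by
    rintro a b (_|_|_) <;>
      simp only [map_mul, map_add, map_neg, map_one, FreeAlgebra.lift_ι_apply,
        Matrix.cons_val_zero, Matrix.cons_val_one, Matrix.head_cons, AlgHom.commutes] <;>
      ext <;>
      simp [QuaternionAlgebra.mk_mul_mk, QuaternionAlgebra.ext_iff,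
        Algebra.algebraMap_eq_smul_one] <;>
      ring⟩

/-- the images of `1, i, j, i·j` form an `ℝ`-basis of the
deformed quaternions; in particular the algebra is 4-dimensional. -/
theorem deformed_quaternions_basis (t : ℝ) :
    letI π := RingQuot.mkAlgHom ℝ (QRel t)
    letI v : Fin 4 → RingQuot (QRel t) :=
      ![1, π (ι ℝ 0), π (ι ℝ 1), π (ι ℝ 0 * ι ℝ 1)]
    LinearIndependent ℝ v ∧ Submodule.span ℝ (Set.range v) = ⊤ ∧
      Module.finrank ℝ (RingQuot (QRel t)) = 4 := by
  set π := RingQuot.mkAlgHom ℝ (QRel t) with hπ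
  set v : Fin 4 → RingQuot (QRel t) :=
    ![1, π (ι ℝ 0), π (ι ℝ 1), π (ι ℝ 0 * ι ℝ 1)] with hv
  set φ := modelHom t with hφ
  -- images of the four elements under φ
  have him : φ (π (ι ℝ 0)) = ⟨0,1,0,0⟩ := by
    rw [hφ, modelHom, RingQuot.liftAlgHom_mkAlgHom_apply, FreeAlgebra.lift_ι_apply]; rfl
  have hjm : φ (π (ι ℝ 1)) = ⟨0,-(t/2),1,0⟩ := by
    rw [hφ, modelHom, RingQuot.liftAlgHom_mkAlgHom_apply, FreeAlgebra.lift_ι_apply]; rfl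
  have hkm : φ (π (ι ℝ 0 * ι ℝ 1)) = ⟨t/2,0,0,1⟩ := by
    rw [hφ, modelHom, RingQuot.liftAlgHom_mkAlgHom_apply, map_mul, FreeAlgebra.lift_ι_apply,
      FreeAlgebra.lift_ι_apply]
    show (⟨0,1,0,0⟩ : QuaternionAlgebra ℝ (-1) 0 (t^2/4-1)) * ⟨0,-(t/2),1,0⟩ = _
    ext <;> simp <;> ring
  -- linear independence
  have hli : LinearIndependent ℝ v := by
    apply LinearIndependent.of_comp φ.toLinearMap
    rw [Fintype.linearIndependent_iff]
    intro g hg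
    have hg' : (∑ i : Fin 4, g i • (φ.toLinearMap ∘ v) i) = 0 := hg
    simp only [Fin.sum_univ_four, Function.comp_apply, hv, Matrix.cons_val_zero,
      Matrix.cons_val_one, Matrix.head_cons, Matrix.cons_val_two, Matrix.tail_cons,
      Matrix.cons_val_three, AlgHom.toLinearMap_apply, map_one, him, hjm, hkm] at hg'
    have h0 := congrArg QuaternionAlgebra.re hg'
    have h1 := congrArg QuaternionAlgebra.imI hg'
    have h2 := congrArg QuaternionAlgebra.imJ hg'
    have h3 := congrArg QuaternionAlgebra.imK hg'
    simp at h0 h1 h2 h3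
    intro i
    fin_cases i
    · show g 0 = 0; linear_combination h0 - (t/2) * h3
    · show g 1 = 0; linear_combination h1 + (t/2) * h2
    · show g 2 = 0; linear_combination h2
    · show g 3 = 0; linear_combination h3
  -- relations in the quotient
  have r1 : π (ι ℝ 0) * π (ι ℝ 0) = -1 := by
    rw [← map_mul, RingQuot.mkAlgHom_rel ℝ (QRel.rel1 (t := t)), map_neg, map_one]
  have r2 : π (ι ℝ 1) * π (ι ℝ 1) = -1 := by
    rw [← map_mul, RingQuot.mkAlgHom_rel ℝ (QRel.rel2 (t := t)), map_neg, map_one]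
  have r3 : π (ι ℝ 0) * π (ι ℝ 1) + π (ι ℝ 1) * π (ι ℝ 0) = t • 1 := by
    rw [← map_mul, ← map_mul, ← map_add, RingQuot.mkAlgHom_rel ℝ (QRel.rel3 (t := t)),
      AlgHom.commutes, Algebra.algebraMap_eq_smul_one]
  have r3' : π (ι ℝ 1) * π (ι ℝ 0) = t • 1 - π (ι ℝ 0) * π (ι ℝ 1) := by
    rw [← r3, add_sub_cancel_left]
  -- span
  set S := Submodule.span ℝ (Set.range v) with hS
  have hmem : ∀ k : Fin 4, v k ∈ S := fun k => Submodule.subset_span ⟨k, rfl⟩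
  have h1S : (1 : RingQuot (QRel t)) ∈ S := hmem 0
  have hiS : π (ι ℝ 0) ∈ S := hmem 1
  have hjS : π (ι ℝ 1) ∈ S := hmem 2
  have hkS : π (ι ℝ 0 * ι ℝ 1) ∈ S := hmem 3
  have hk : π (ι ℝ 0 * ι ℝ 1) = π (ι ℝ 0) * π (ι ℝ 1) := map_mul _ _ _
  have hkS' : π (ι ℝ 0) * π (ι ℝ 1) ∈ S := hk ▸ hkS
  -- helper identities (stated ambiently so that `rw` matches the goal's instances)
  have e1l : ∀ x : RingQuot (QRel t), 1 * x = x := fun x => one_mul x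
  have e1r : ∀ x : RingQuot (QRel t), x * 1 = x := fun x => mul_one x
  have e0l : ∀ x : RingQuot (QRel t), 0 * x = 0 := fun x => zero_mul x
  have e0r : ∀ x : RingQuot (QRel t), x * 0 = 0 := fun x => mul_zero x
  have enl : ∀ x : RingQuot (QRel t), -1 * x = -x := fun x => neg_one_mul x
  have enr : ∀ x : RingQuot (QRel t), x * -1 = -x := fun x => mul_neg_one x
  have esn : ∀ x y : RingQuot (QRel t), x - -y = x + y := fun x y => sub_neg_eq_add x y
  -- products of basis vectors stay in S
  have hprod : ∀ a b : Fin 4, v a * v b ∈ S := by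
    have pii : π (ι ℝ 0) * π (ι ℝ 0) ∈ S := by rw [r1]; exact neg_mem h1S
    have pij : π (ι ℝ 0) * π (ι ℝ 1) ∈ S := hkS'
    have pji : π (ι ℝ 1) * π (ι ℝ 0) ∈ S := by
      rw [r3']; exact sub_mem (Submodule.smul_mem _ _ h1S) hkS'
    have pjj : π (ι ℝ 1) * π (ι ℝ 1) ∈ S := by rw [r2]; exact neg_mem h1S
    have pik : π (ι ℝ 0) * (π (ι ℝ 0) * π (ι ℝ 1)) ∈ S := by
      rw [← mul_assoc, r1, enl]; exact neg_mem hjS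
    have pjk : π (ι ℝ 1) * (π (ι ℝ 0) * π (ι ℝ 1)) ∈ S := by
      rw [← mul_assoc, r3', sub_mul, smul_mul_assoc, one_mul, mul_assoc, r2, enr, esn]
      exact add_mem (Submodule.smul_mem _ _ hjS) hiS
    have pki : π (ι ℝ 0) * π (ι ℝ 1) * π (ι ℝ 0) ∈ S := by
      rw [mul_assoc, r3', mul_sub, mul_smul_comm, mul_one, ← mul_assoc, r1, enl, esn]
      exact add_mem (Submodule.smul_mem _ _ hiS) hjS
    have pkj : π (ι ℝ 0) * π (ι ℝ 1) * π (ι ℝ 1) ∈ S := by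
      rw [mul_assoc, r2, enr]; exact neg_mem hiS
    have pkk : π (ι ℝ 0) * π (ι ℝ 1) * (π (ι ℝ 0) * π (ι ℝ 1)) ∈ S := by
      rw [mul_assoc, ← mul_assoc (π (ι ℝ 1)), r3', sub_mul, smul_mul_assoc, one_mul, mul_assoc,
        r2, enr, esn, mul_add, mul_smul_comm, r1]
      exact add_mem (Submodule.smul_mem _ _ hkS') (neg_mem h1S)
    intro a b
    have ha : v a = 1 ∨ v a = π (ι ℝ 0) ∨ v a = π (ι ℝ 1) ∨ v a = π (ι ℝ 0) * π (ι ℝ 1) := by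
      fin_cases a <;> simp [hv, hk]
    have hb : v b = 1 ∨ v b = π (ι ℝ 0) ∨ v b = π (ι ℝ 1) ∨ v b = π (ι ℝ 0) * π (ι ℝ 1) := by
      fin_cases b <;> simp [hv, hk]
    rcases ha with h | h | h | h <;> rcases hb with h' | h' | h' | h' <;> rw [h, h']
    · rw [e1l]; exact h1S
    · rw [e1l]; exact hiS
    · rw [e1l]; exact hjS
    · rw [e1l]; exact hkS'
    · rw [e1r]; exact hiS
    · exact pii
    · exact pij
    · exact pik
    · rw [e1r]; exact hjS
    · exact pji
    · exact pjj
    · exact pjk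
    · rw [e1r]; exact hkS'
    · exact pki
    · exact pkj
    · exact pkk
  have hmul : ∀ x ∈ S, ∀ y ∈ S, x * y ∈ S := by
    intro x hx
    refine Submodule.span_induction ?_ ?_ ?_ ?_ hx
    · rintro x ⟨a, rfl⟩ y hy
      refine Submodule.span_induction ?_ ?_ ?_ ?_ hy
      · rintro y ⟨b, rfl⟩; exact hprod a b
      · rw [e0r]; exact zero_mem S
      · intro y z _ _ hy hz; rw [mul_add]; exact add_mem hy hz
      · intro c y _ hy; rw [mul_smul_comm]; exact Submodule.smul_mem _ _ hy
    · intro y _; rw [e0l]; exact zero_mem S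
    · intro x y _ _ hx hy z hz; rw [add_mul]; exact add_mem (hx z hz) (hy z hz)
    · intro c x _ hx y hy; rw [smul_mul_assoc]; exact Submodule.smul_mem _ _ (hx y hy)
  have hspan : S = ⊤ := by
    rw [eq_top_iff]
    rintro x -
    obtain ⟨y, rfl⟩ := RingQuot.mkAlgHom_surjective ℝ (QRel t) x
    induction y using FreeAlgebra.induction with
    | grade0 r =>
        rw [AlgHom.commutes, Algebra.algebraMap_eq_smul_one]
        exact Submodule.smul_mem _ _ h1S
    | grade1 x => fin_cases x; exacts [hiS, hjS]
    | mul a b ha hb => rw [map_mul]; exact hmul _ ha _ hb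
    | add a b ha hb => rw [map_add]; exact add_mem ha hb
  -- finrank
  have hb : Module.finrank ℝ (RingQuot (QRel t)) = 4 := by
    have b := Module.Basis.mk hli (by rw [← hS, hspan])
    rw [Module.finrank_eq_card_basis b, Fintype.card_fin]
  exact ⟨hli, hspan, hb⟩
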